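/- Let μ and ν be Borel probability measures on ℝ with finite first moments M_μ = ∫|u| dμ(u) and M_ν = ∫|v| dν(v). Let ψ be a probability density on ℝ supported in (0,1), δ > 0, ψ_δ(ξ) = δ⁻¹ψ(ξ/δ), and let ψ_{2,δ} be the second antiderivative of ψ_δ vanishing at −∞. Then 0 ≤ ∫_{ℝ²} [ (u−v)⁺ − ψ_{2,δ}(u−v) ] dμ(u) dν(v) ≤ ∫_0^{+∞} [ min(M_μ, δw) + min(M_ν, δw) ] ψ(w) dw. -/

import Mathlib

open MeasureTheory Set

private lemma scale_Iic (f : ℝ → ℝ) {δ : ℝ} (hδ : 0 < δ) (ζ : ℝ) :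
    (∫ s in Set.Iic ζ, f (s / δ)) = δ * ∫ t in Set.Iic (ζ / δ), f t := by
  rw [← integral_indicator measurableSet_Iic, ← integral_indicator measurableSet_Iic]
  have h : (fun s => (Set.Iic ζ).indicator (fun s => f (s / δ)) s)
      = fun s => (Set.Iic (ζ / δ)).indicator f (s / δ) := by
    funext s
    by_cases h : s ≤ ζ
    · have h' : s / δ ≤ ζ / δ := (div_le_div_iff_of_pos_right hδ).mpr h
      simp [Set.indicator_apply, Set.mem_Iic, h, h']
    · have h' : ¬ s / δ ≤ ζ / δ := fun hc => h ((div_le_div_iff_of_pos_right hδ).mp hc)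
      simp [Set.indicator_apply, Set.mem_Iic, h, h']
  rw [h, MeasureTheory.Measure.integral_comp_div ((Set.Iic (ζ / δ)).indicator f) δ,
    abs_of_pos hδ, smul_eq_mul]

private lemma fubini_Iic {g : ℝ → ℝ} (hg : Integrable g volume)
    (h0 : ∀ t, t ≤ (0 : ℝ) → g t = 0) (a : ℝ) :
    (∫ η in Set.Iic a, ∫ t in Set.Iic η, g t) = ∫ t, g t * max (a - t) 0 := by
  have hH0 : ∀ η ≤ (0 : ℝ), (∫ t in Set.Iic η, g t) = 0 := fun η hη =>
    setIntegral_eq_zero_of_forall_eq_zero fun t ht => h0 t (le_trans ht hη)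
  have hout : (∫ η in Set.Iic a, ∫ t in Set.Iic η, g t)
      = ∫ η in Set.Ioc 0 a, ∫ t in Set.Iic η, g t := by
    rw [← integral_indicator measurableSet_Iic, ← integral_indicator measurableSet_Ioc]
    congr 1
    funext η
    by_cases h1 : η ≤ a
    · by_cases h2 : (0 : ℝ) < η
      · rw [Set.indicator_of_mem (Set.mem_Iic.mpr h1),
          Set.indicator_of_mem (Set.mem_Ioc.mpr ⟨h2, h1⟩)]
      · rw [Set.indicator_of_mem (Set.mem_Iic.mpr h1),
          Set.indicator_of_notMem (fun hc => h2 (Set.mem_Ioc.mp hc).1),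
          hH0 η (not_lt.mp h2)]
    · rw [Set.indicator_of_notMem (fun hc => h1 (Set.mem_Iic.mp hc)),
        Set.indicator_of_notMem (fun hc => h1 (Set.mem_Ioc.mp hc).2)]
  haveI : IsFiniteMeasure (volume.restrict (Set.Ioc (0:ℝ) a)) := by
    constructor
    rw [Measure.restrict_apply_univ, Real.volume_Ioc]
    exact ENNReal.ofReal_lt_top
  have hmeas : AEStronglyMeasurable (fun p : ℝ × ℝ => (Set.Iic p.1).indicator g p.2)
      ((volume.restrict (Set.Ioc 0 a)).prod volume) := by
    have heq : (fun p : ℝ × ℝ => (Set.Iic p.1).indicator g p.2)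
        = fun p : ℝ × ℝ => ({q : ℝ × ℝ | q.2 ≤ q.1}.indicator 1 p) * g p.2 := by
      funext p
      by_cases h : p.2 ≤ p.1 <;>
        simp [Set.indicator_apply, Set.mem_Iic, Set.mem_setOf_eq, h]
    rw [heq]
    exact ((measurable_one.indicator
      ((isClosed_le continuous_snd continuous_fst).measurableSet)).aestronglyMeasurable).mul
      hg.1.comp_snd
  have hint : Integrable (Function.uncurry fun η t => (Set.Iic η).indicator g t)
      ((volume.restrict (Set.Ioc 0 a)).prod volume) := by
    refine Integrable.mono' ((integrable_const (1 : ℝ)).mul_prod hg.abs) hmeas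
      (Filter.Eventually.of_forall fun p => ?_)
    calc ‖(Set.Iic p.1).indicator g p.2‖ ≤ ‖g p.2‖ := norm_indicator_le_norm_self _ _
      _ = 1 * |g p.2| := by rw [Real.norm_eq_abs, one_mul]
  have hswap := integral_integral_swap hint
  rw [hout]
  calc (∫ η in Set.Ioc 0 a, ∫ t in Set.Iic η, g t)
      = ∫ η in Set.Ioc 0 a, ∫ t, (Set.Iic η).indicator g t := by
        simp_rw [integral_indicator measurableSet_Iic]
    _ = ∫ t, ∫ η in Set.Ioc 0 a, (Set.Iic η).indicator g t := hswap
    _ = ∫ t, g t * max (a - t) 0 := by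
        refine integral_congr_ae (Filter.Eventually.of_forall fun t => ?_)
        show (∫ η in Set.Ioc 0 a, (Set.Iic η).indicator g t) = g t * max (a - t) 0
        have h1 : (∫ η in Set.Ioc 0 a, (Set.Iic η).indicator g t)
            = ∫ η in Set.Ioc 0 a, (Set.Ici t).indicator (fun _ => g t) η := by
          refine integral_congr_ae (Filter.Eventually.of_forall fun η => ?_)
          by_cases h : t ≤ η <;>
            simp [Set.indicator_apply, Set.mem_Iic, Set.mem_Ici, h]
        rw [h1, setIntegral_indicator measurableSet_Ici, setIntegral_const]
        by_cases hgt : g t = 0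
        · simp [hgt]
        · have ht : 0 < t := by
            by_contra h
            exact hgt (h0 t (not_lt.mp h))
          have hset : Set.Ioc 0 a ∩ Set.Ici t = Set.Icc t a := by
            ext η
            simp only [Set.mem_inter_iff, Set.mem_Ioc, Set.mem_Ici, Set.mem_Icc]
            constructor
            · rintro ⟨⟨_, h2⟩, h3⟩; exact ⟨h3, h2⟩
            · rintro ⟨h1', h2⟩; exact ⟨⟨lt_of_lt_of_le ht h1', h2⟩, h1'⟩
          rw [hset, measureReal_def, Real.volume_Icc]
          rcases le_total t a with h | h
          · rw [ENNReal.toReal_ofReal (by linarith), max_eq_left (by linarith),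
              smul_eq_mul, mul_comm]
          · rw [ENNReal.ofReal_of_nonpos (by linarith), max_eq_right (by linarith)]
            simp

private lemma minmax_id {x c : ℝ} (hc : 0 < c) :
    min (max x 0) c = max x 0 - max (x - c) 0 := by
  rcases le_total x 0 with h | h
  · rw [max_eq_right h, max_eq_right (by linarith), min_eq_left hc.le]; ring
  · rw [max_eq_left h]
    rcases le_total x c with h2 | h2
    · rw [min_eq_left h2, max_eq_right (by linarith)]; ring
    · rw [min_eq_right h2, max_eq_left (by linarith)]; ring

private lemma min_add_le {a b c : ℝ} (ha : 0 ≤ a) (hb : 0 ≤ b) (hc : 0 ≤ c) :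
    min (a + b) c ≤ min a c + min b c := by
  rcases le_total (a + b) c with h | h
  · rw [min_eq_left h, min_eq_left (by linarith), min_eq_left (by linarith)]
  · rw [min_eq_right h]
    rcases le_total a c with h1 | h1
    · rcases le_total b c with h2 | h2
      · rw [min_eq_left h1, min_eq_left h2]; linarith
      · rw [min_eq_right h2]
        have : 0 ≤ min a c := le_min ha hc
        linarith
    · rw [min_eq_right h1]
      have : 0 ≤ min b c := le_min hb hc
      linarith

private lemma key_id (ψ : ℝ → ℝ) (hψ0 : ∀ s, 0 ≤ ψ s) (hψint : Integrable ψ volume)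
    (hψ1 : (∫ s, ψ s) = 1) (hsupp : Function.support ψ ⊆ Set.Ioo 0 1)
    {δ : ℝ} (hδ : 0 < δ) (ξ : ℝ) :
    max ξ 0 - (∫ ζ in Set.Iic ξ, ∫ s in Set.Iic ζ, δ⁻¹ * ψ (s / δ))
      = ∫ w in Set.Ioi (0 : ℝ), min (max ξ 0) (δ * w) * ψ w := by
  have hψz : ∀ t, t ≤ (0 : ℝ) → ψ t = 0 := by
    intro t ht
    by_contra h
    exact absurd (hsupp (Function.mem_support.mpr h)).1 (not_lt.mpr ht)
  have h1 : ∀ ζ : ℝ, (∫ s in Set.Iic ζ, δ⁻¹ * ψ (s / δ)) = ∫ t in Set.Iic (ζ / δ), ψ t := by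
    intro ζ
    rw [integral_const_mul, scale_Iic ψ hδ ζ, ← mul_assoc, inv_mul_cancel₀ hδ.ne', one_mul]
  have h2 : (∫ ζ in Set.Iic ξ, ∫ s in Set.Iic ζ, δ⁻¹ * ψ (s / δ))
      = ∫ w, ψ w * max (ξ - δ * w) 0 := by
    simp_rw [h1]
    rw [scale_Iic (fun x => ∫ t in Set.Iic x, ψ t) hδ ξ, fubini_Iic hψint hψz (ξ / δ),
      ← integral_const_mul]
    refine integral_congr_ae (Filter.Eventually.of_forall fun w => ?_)
    show δ * (ψ w * max (ξ / δ - w) 0) = ψ w * max (ξ - δ * w) 0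
    rw [← mul_assoc, mul_comm δ (ψ w), mul_assoc]
    congr 1
    rw [mul_max_of_nonneg _ _ hδ.le, mul_zero, mul_sub, mul_comm δ (ξ / δ),
      div_mul_cancel₀ _ hδ.ne']
  rw [h2, setIntegral_eq_integral_of_forall_compl_eq_zero (fun w hw => by
    rw [hψz w (not_lt.mp (by simpa using hw)), mul_zero])]
  have I1 : Integrable (fun w => ψ w * max (ξ - δ * w) 0) volume := by
    refine Integrable.mono' (hψint.abs.const_mul (max ξ 0))
      (hψint.1.mul ((continuous_const.sub
        (continuous_const.mul continuous_id)).max continuous_const).aestronglyMeasurable)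
      (Filter.Eventually.of_forall fun w => ?_)
    by_cases hw : ψ w = 0
    · simp [hw]
    · have hw0 : 0 < w := (hsupp (Function.mem_support.mpr hw)).1
      rw [Real.norm_eq_abs, abs_mul, abs_of_nonneg (le_max_right (ξ - δ * w) 0),
        mul_comm (|ψ w|) _]
      refine mul_le_mul_of_nonneg_right ?_ (abs_nonneg _)
      refine max_le_max ?_ le_rfl
      nlinarith
  have I3 : Integrable (fun w => max ξ 0 * ψ w) volume := hψint.const_mul _
  have hpt : (fun w => min (max ξ 0) (δ * w) * ψ w)
      = fun w => max ξ 0 * ψ w - ψ w * max (ξ - δ * w) 0 := by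
    funext w
    by_cases hw : ψ w = 0
    · simp [hw]
    · have hw0 : 0 < δ * w := mul_pos hδ (hsupp (Function.mem_support.mpr hw)).1
      rw [minmax_id hw0]
      ring
  rw [hpt, integral_sub I3 I1, integral_const_mul, hψ1, mul_one]

/-- **Sandwich estimate (f1f2dd4).** Let `μ, ν` be Borel probability measures on `ℝ`
with finite first moments `M_μ = ∫|u| dμ`, `M_ν = ∫|v| dν`. Let `ψ` be a probability
density supported in `(0, 1)`, `δ > 0`, `ψ_δ(ξ) = δ⁻¹ ψ(ξ/δ)`, and `ψ_{2,δ}` the second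
antiderivative of `ψ_δ` vanishing at `-∞`. Then
`0 ≤ ∫∫ [(u - v)⁺ - ψ_{2,δ}(u - v)] dμ dν ≤ ∫_0^∞ [min(M_μ, δw) + min(M_ν, δw)] ψ(w) dw`. -/
theorem stmt7 (μ ν : Measure ℝ) [IsProbabilityMeasure μ] [IsProbabilityMeasure ν]
    (hμ : Integrable (fun u => |u|) μ) (hν : Integrable (fun v => |v|) ν)
    (ψ : ℝ → ℝ) (hψ0 : ∀ s, 0 ≤ ψ s) (hψint : Integrable ψ volume)
    (hψ1 : (∫ s, ψ s) = 1) (hsupp : Function.support ψ ⊆ Set.Ioo 0 1)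
    (δ : ℝ) (hδ : 0 < δ) :
    0 ≤ ∫ q : ℝ × ℝ,
        (max (q.1 - q.2) 0 - ∫ ζ in Set.Iic (q.1 - q.2), ∫ s in Set.Iic ζ, δ⁻¹ * ψ (s / δ))
        ∂(μ.prod ν) ∧
    ∫ q : ℝ × ℝ,
        (max (q.1 - q.2) 0 - ∫ ζ in Set.Iic (q.1 - q.2), ∫ s in Set.Iic ζ, δ⁻¹ * ψ (s / δ))
        ∂(μ.prod ν)
      ≤ ∫ w in Set.Ioi (0:ℝ),
          (min (∫ u, |u| ∂μ) (δ * w) + min (∫ v, |v| ∂ν) (δ * w)) * ψ w := by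
  have hψz : ∀ t, t ≤ (0 : ℝ) → ψ t = 0 := by
    intro t ht
    by_contra h
    exact absurd (hsupp (Function.mem_support.mpr h)).1 (not_lt.mpr ht)
  simp only [key_id ψ hψ0 hψint hψ1 hsupp hδ]
  have hΦ0 : ∀ ξ : ℝ, 0 ≤ ∫ w in Set.Ioi (0 : ℝ), min (max ξ 0) (δ * w) * ψ w :=
    fun ξ => setIntegral_nonneg measurableSet_Ioi fun w hw =>
      mul_nonneg (le_min (le_max_right _ _) (mul_nonneg hδ.le (le_of_lt hw))) (hψ0 w)
  have habs_min : ∀ r w : ℝ, ψ w ≠ 0 → |min r (δ * w)| ≤ |r| := by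
    intro r w hw
    have hw0 : 0 < δ * w := mul_pos hδ (hsupp (Function.mem_support.mpr hw)).1
    rcases le_total r (δ * w) with h | h
    · rw [min_eq_left h]
    · rw [min_eq_right h, abs_of_pos hw0]
      exact le_trans h (le_abs_self r)
  have IA : ∀ r : ℝ, IntegrableOn (fun w => min r (δ * w) * ψ w) (Set.Ioi 0) volume := by
    intro r
    refine Integrable.mono' (hψint.abs.const_mul |r|).integrableOn
      (((continuous_const.min
        (continuous_const.mul continuous_id)).aestronglyMeasurable).mul hψint.1.restrict)
      (Filter.Eventually.of_forall fun w => ?_)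
    by_cases hw : ψ w = 0
    · simp [hw]
    · rw [Real.norm_eq_abs, abs_mul]
      exact mul_le_mul_of_nonneg_right (habs_min r w hw) (abs_nonneg _)
  have hψIoi : (∫ w in Set.Ioi (0 : ℝ), ψ w) = 1 := by
    rw [setIntegral_eq_integral_of_forall_compl_eq_zero
      (fun w hw => hψz w (not_lt.mp (by simpa using hw)))]
    exact hψ1
  have hA_le : ∀ r : ℝ, 0 ≤ r →
      (∫ w in Set.Ioi (0 : ℝ), min r (δ * w) * ψ w) ≤ r := by
    intro r hr
    calc (∫ w in Set.Ioi (0 : ℝ), min r (δ * w) * ψ w)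
        ≤ ∫ w in Set.Ioi (0 : ℝ), r * ψ w :=
          setIntegral_mono_on (IA r) (hψint.const_mul r).integrableOn measurableSet_Ioi
            fun w _ => mul_le_mul_of_nonneg_right (min_le_left _ _) (hψ0 w)
      _ = r := by rw [integral_const_mul, hψIoi, mul_one]
  have hA0 : ∀ r : ℝ, 0 ≤ r → 0 ≤ ∫ w in Set.Ioi (0 : ℝ), min r (δ * w) * ψ w := by
    intro r hr
    exact setIntegral_nonneg measurableSet_Ioi fun w hw =>
      mul_nonneg (le_min hr (mul_nonneg hδ.le (le_of_lt hw))) (hψ0 w)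
  have hAmono : Monotone (fun r : ℝ => ∫ w in Set.Ioi (0 : ℝ), min r (δ * w) * ψ w) := by
    intro r r' h
    exact setIntegral_mono_on (IA r) (IA r') measurableSet_Ioi fun w _ =>
      mul_le_mul_of_nonneg_right (min_le_min h le_rfl) (hψ0 w)
  refine ⟨integral_nonneg fun q => hΦ0 _, ?_⟩
  -- pointwise bound
  have hΦle : ∀ u v : ℝ,
      (∫ w in Set.Ioi (0 : ℝ), min (max (u - v) 0) (δ * w) * ψ w)
        ≤ (∫ w in Set.Ioi (0 : ℝ), min |u| (δ * w) * ψ w)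
          + ∫ w in Set.Ioi (0 : ℝ), min |v| (δ * w) * ψ w := by
    intro u v
    calc (∫ w in Set.Ioi (0 : ℝ), min (max (u - v) 0) (δ * w) * ψ w)
        ≤ ∫ w in Set.Ioi (0 : ℝ), (min |u| (δ * w) * ψ w + min |v| (δ * w) * ψ w) := by
          refine setIntegral_mono_on (IA _) ((IA |u|).add (IA |v|)) measurableSet_Ioi
            fun w hw => ?_
          rw [← add_mul]
          refine mul_le_mul_of_nonneg_right ?_ (hψ0 w)
          refine le_trans (min_le_min ?_ le_rfl)
            (min_add_le (abs_nonneg u) (abs_nonneg v) (mul_nonneg hδ.le (le_of_lt hw)))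
          exact max_le (le_trans (le_abs_self _) (abs_sub u v))
            (add_nonneg (abs_nonneg u) (abs_nonneg v))
      _ = _ := integral_add (IA |u|) (IA |v|)
  -- integrability of the majorant on the product
  have hax : Integrable (fun q : ℝ × ℝ => |q.1|) (μ.prod ν) := by
    have := hμ.mul_prod (integrable_const (1 : ℝ) : Integrable _ ν)
    simpa using this
  have hay : Integrable (fun q : ℝ × ℝ => |q.2|) (μ.prod ν) := by
    have := (integrable_const (1 : ℝ) : Integrable _ μ).mul_prod hν
    simpa using this
  have hAmeas : Measurable (fun r : ℝ => ∫ w in Set.Ioi (0 : ℝ), min r (δ * w) * ψ w) :=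
    hAmono.measurable
  have hA1 : Integrable
      (fun q : ℝ × ℝ => ∫ w in Set.Ioi (0 : ℝ), min |q.1| (δ * w) * ψ w) (μ.prod ν) := by
    refine Integrable.mono' hax
      ((hAmeas.comp (measurable_abs.comp measurable_fst)).aestronglyMeasurable)
      (Filter.Eventually.of_forall fun q => ?_)
    rw [Real.norm_eq_abs, abs_of_nonneg (hA0 _ (abs_nonneg _))]
    exact hA_le _ (abs_nonneg _)
  have hA2 : Integrable
      (fun q : ℝ × ℝ => ∫ w in Set.Ioi (0 : ℝ), min |q.2| (δ * w) * ψ w) (μ.prod ν) := by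
    refine Integrable.mono' hay
      ((hAmeas.comp (measurable_abs.comp measurable_snd)).aestronglyMeasurable)
      (Filter.Eventually.of_forall fun q => ?_)
    rw [Real.norm_eq_abs, abs_of_nonneg (hA0 _ (abs_nonneg _))]
    exact hA_le _ (abs_nonneg _)
  have hmono1 : (∫ q : ℝ × ℝ,
        (∫ w in Set.Ioi (0 : ℝ), min (max (q.1 - q.2) 0) (δ * w) * ψ w) ∂(μ.prod ν))
      ≤ ∫ q : ℝ × ℝ,
        ((∫ w in Set.Ioi (0 : ℝ), min |q.1| (δ * w) * ψ w)
          + ∫ w in Set.Ioi (0 : ℝ), min |q.2| (δ * w) * ψ w) ∂(μ.prod ν) := by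
    refine integral_mono_of_nonneg (Filter.Eventually.of_forall fun q => hΦ0 _)
      (hA1.add hA2) (Filter.Eventually.of_forall fun q => hΦle q.1 q.2)
  have hsplit : (∫ q : ℝ × ℝ,
        ((∫ w in Set.Ioi (0 : ℝ), min |q.1| (δ * w) * ψ w)
          + ∫ w in Set.Ioi (0 : ℝ), min |q.2| (δ * w) * ψ w) ∂(μ.prod ν))
      = (∫ u, (∫ w in Set.Ioi (0 : ℝ), min |u| (δ * w) * ψ w) ∂μ)
        + ∫ v, (∫ w in Set.Ioi (0 : ℝ), min |v| (δ * w) * ψ w) ∂ν := by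
    rw [integral_add hA1 hA2]
    congr 1
    · rw [integral_prod _ hA1]
      simp [integral_const, measure_univ]
    · rw [integral_prod _ hA2]
      simp [integral_const, measure_univ]
  -- Fubini/swap bound for a single factor
  have hswap : ∀ (ρ : Measure ℝ), IsProbabilityMeasure ρ → Integrable (fun u => |u|) ρ →
      (∫ u, (∫ w in Set.Ioi (0 : ℝ), min |u| (δ * w) * ψ w) ∂ρ)
        ≤ ∫ w in Set.Ioi (0 : ℝ), min (∫ u, |u| ∂ρ) (δ * w) * ψ w := by
    intro ρ hρ hint1
    haveI := hρ
    have Imin : ∀ w : ℝ, Integrable (fun u => min |u| (δ * w)) ρ := by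
      intro w
      refine Integrable.mono' (hint1.add (integrable_const |δ * w|))
        ((continuous_abs.min continuous_const).measurable.aestronglyMeasurable)
        (Filter.Eventually.of_forall fun u => ?_)
      rw [Real.norm_eq_abs]
      rcases le_total |u| (δ * w) with h | h
      · rw [min_eq_left h, abs_abs]
        exact le_add_of_nonneg_right (abs_nonneg _)
      · rw [min_eq_right h]
        exact le_add_of_nonneg_left (abs_nonneg _)
    have hG : Integrable (Function.uncurry fun u w => min |u| (δ * w) * ψ w)
        (ρ.prod (volume.restrict (Set.Ioi 0))) := by
      refine Integrable.mono' (hint1.mul_prod hψint.abs.integrableOn)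
        ((((continuous_abs.comp continuous_fst).min
          (continuous_const.mul continuous_snd)).aestronglyMeasurable).mul
          hψint.1.restrict.comp_snd)
        (Filter.Eventually.of_forall fun p => ?_)
      by_cases hw : ψ p.2 = 0
      · simp [Function.uncurry, hw]
      · simp only [Function.uncurry]
        rw [Real.norm_eq_abs, abs_mul]
        refine mul_le_mul_of_nonneg_right ?_ (abs_nonneg _)
        calc |min |p.1| (δ * p.2)| ≤ |(|p.1|)| := habs_min _ _ hw
          _ = |p.1| := abs_abs _
    have hswapped := integral_integral_swap hG
    calc (∫ u, (∫ w in Set.Ioi (0 : ℝ), min |u| (δ * w) * ψ w) ∂ρ)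
        = ∫ w in Set.Ioi (0 : ℝ), (∫ u, min |u| (δ * w) * ψ w ∂ρ) := hswapped
      _ ≤ ∫ w in Set.Ioi (0 : ℝ), min (∫ u, |u| ∂ρ) (δ * w) * ψ w := by
          refine integral_mono_of_nonneg ?_ (IA _) ?_
          · refine (ae_restrict_iff' measurableSet_Ioi).2
              (Filter.Eventually.of_forall fun w hw => ?_)
            exact integral_nonneg fun u =>
              mul_nonneg (le_min (abs_nonneg u) (mul_nonneg hδ.le (le_of_lt hw))) (hψ0 w)
          · refine (ae_restrict_iff' measurableSet_Ioi).2
              (Filter.Eventually.of_forall fun w hw => ?_)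
            show (∫ u, min |u| (δ * w) * ψ w ∂ρ) ≤ min (∫ u, |u| ∂ρ) (δ * w) * ψ w
            rw [integral_mul_const]
            refine mul_le_mul_of_nonneg_right (le_min ?_ ?_) (hψ0 w)
            · exact integral_mono (Imin w) hint1 fun u => min_le_left _ _
            · calc (∫ u, min |u| (δ * w) ∂ρ) ≤ ∫ _, δ * w ∂ρ :=
                  integral_mono (Imin w) (integrable_const _) fun u => min_le_right _ _
                _ = δ * w := by simp [integral_const, measure_univ]
  have hfin : (∫ w in Set.Ioi (0:ℝ),
        (min (∫ u, |u| ∂μ) (δ * w) + min (∫ v, |v| ∂ν) (δ * w)) * ψ w)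
      = (∫ w in Set.Ioi (0 : ℝ), min (∫ u, |u| ∂μ) (δ * w) * ψ w)
        + ∫ w in Set.Ioi (0 : ℝ), min (∫ v, |v| ∂ν) (δ * w) * ψ w := by
    simp_rw [add_mul]
    exact integral_add (IA _) (IA _)
  rw [hfin]
  exact le_trans hmono1 (le_trans (le_of_eq hsplit)
    (add_le_add (hswap μ inferInstance hμ) (hswap ν inferInstance hν)))
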